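/- For every plane poset P with n elements, the set S(P, ι(P)) of bijections σ : P → ι(P) such that (x ≤_h y in P implies σ(x) ≤_r σ(y) in ι(P)) and (σ(x) ≤_h σ(y) in ι(P) implies x ≤_r y in P) is reduced to the single element Id_P. Here ι(P) is P with the two orders exchanged. -/

import Mathlib

/-- A plane poset: a finite set with two partial orders `leh` and `ler` such that
two distinct elements are comparable for `leh` iff they are not comparable for `ler`. -/
structure PlanePoset (α : Type) where
  leh : α → α → Prop
  ler : α → α → Prop
  leh_refl : ∀ x, leh x x
  leh_antisymm : ∀ ⦃x y⦄, leh x y → leh y x → x = y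
  leh_trans : ∀ ⦃x y z⦄, leh x y → leh y z → leh x z
  ler_refl : ∀ x, ler x x
  ler_antisymm : ∀ ⦃x y⦄, ler x y → ler y x → x = y
  ler_trans : ∀ ⦃x y z⦄, ler x y → ler y z → ler x z
  compat : ∀ x y, x ≠ y → ((leh x y ∨ leh y x) ↔ ¬(ler x y ∨ ler y x))

/-- `ι(P)`: the plane poset obtained by exchanging the two orders. -/
def PlanePoset.iota {α : Type} (P : PlanePoset α) : PlanePoset α where
  leh := P.ler
  ler := P.leh
  leh_refl := P.ler_refl
  leh_antisymm := P.ler_antisymm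
  leh_trans := P.ler_trans
  ler_refl := P.leh_refl
  ler_antisymm := P.leh_antisymm
  ler_trans := P.leh_trans
  compat x y hxy := by have := P.compat x y hxy; tauto

open Classical in
/-- `S(P,ι(P))` is reduced to the identity. -/
theorem stmt11 {α : Type} [Fintype α] (P : PlanePoset α) (σ : α ≃ α) :
    ((∀ x y, P.leh x y → P.iota.ler (σ x) (σ y)) ∧
     (∀ x y, P.iota.leh (σ x) (σ y) → P.ler x y)) ↔ σ = Equiv.refl α := by
  constructor
  · rintro ⟨h1, h2⟩
    -- h1 : leh x y → leh (σ x) (σ y);  h2 : ler (σ x) (σ y) → ler x y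
    replace h1 : ∀ x y, P.leh x y → P.leh (σ x) (σ y) := h1
    replace h2 : ∀ x y, P.ler (σ x) (σ y) → P.ler x y := h2
    -- Step 1: σ also reflects leh, by a counting argument.
    have hrefl : ∀ x y, P.leh (σ x) (σ y) → P.leh x y := by
      have hS : (Finset.univ.filter (fun p : α × α => P.leh p.1 p.2)).image
          (fun p : α × α => (σ p.1, σ p.2)) =
          Finset.univ.filter (fun p : α × α => P.leh p.1 p.2) := by
        apply Finset.eq_of_subset_of_card_le
        · intro q hq
          simp only [Finset.mem_image, Finset.mem_filter, Finset.mem_univ, true_and] at hq ⊢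
          obtain ⟨p, hp, rfl⟩ := hq
          exact h1 _ _ hp
        · rw [Finset.card_image_of_injective]
          intro p q hpq
          have h1' : σ p.1 = σ q.1 := congrArg Prod.fst hpq
          have h2' : σ p.2 = σ q.2 := congrArg Prod.snd hpq
          exact Prod.ext (σ.injective h1') (σ.injective h2')
      intro x y hxy
      have : (σ x, σ y) ∈ Finset.univ.filter (fun p : α × α => P.leh p.1 p.2) := by
        simp [hxy]
      rw [← hS] at this
      simp only [Finset.mem_image, Finset.mem_filter, Finset.mem_univ, true_and] at this
      obtain ⟨p, hp, hpe⟩ := this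
      have e1 : p.1 = x := σ.injective (congrArg Prod.fst hpe)
      have e2 : p.2 = y := σ.injective (congrArg Prod.snd hpe)
      rwa [e1, e2] at hp
    -- Step 2: σ preserves ler.
    have h3 : ∀ x y, P.ler x y → P.ler (σ x) (σ y) := by
      intro x y hxy
      by_cases hne : x = y
      · subst hne; exact P.ler_refl _
      have hne' : σ x ≠ σ y := fun h => hne (σ.injective h)
      have hc := P.compat (σ x) (σ y) hne'
      by_cases hh : P.leh (σ x) (σ y) ∨ P.leh (σ y) (σ x)
      · exfalso
        rcases hh with hh | hh
        · have := hrefl _ _ hh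
          exact (P.compat x y hne).mp (Or.inl this) (Or.inl hxy)
        · have := hrefl _ _ hh
          exact (P.compat x y hne).mp (Or.inr this) (Or.inl hxy)
      · have : P.ler (σ x) (σ y) ∨ P.ler (σ y) (σ x) := by tauto
        rcases this with h | h
        · exact h
        · exact absurd (P.ler_antisymm hxy (h2 _ _ h)) hne
    -- Step 3: build a linear order `leh ∪ ler` preserved and reflected by σ.
    letI : LinearOrder α :=
      { le := fun x y => P.leh x y ∨ P.ler x y
        le_refl := fun x => Or.inl (P.leh_refl x)
        le_trans := by
          rintro x y z (hxy | hxy) (hyz | hyz)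
          · exact Or.inl (P.leh_trans hxy hyz)
          · by_cases hxz : x = z
            · exact Or.inl (hxz ▸ P.leh_refl x)
            by_cases hxy' : x = y
            · exact Or.inr (hxy' ▸ hyz)
            by_cases hyz' : y = z
            · exact Or.inl (hyz' ▸ hxy)
            rcases Classical.em (P.leh x z ∨ P.ler x z) with h | h
            · tauto
            have hx := (P.compat x z hxz)
            have : P.leh z x ∨ P.ler z x := by tauto
            rcases this with h' | h'
            · exact absurd ((P.compat y z hyz').mp (Or.inr (P.leh_trans h' hxy)))
                (fun hn => hn (Or.inl hyz))
            · exact absurd ((P.compat x y hxy').mp (Or.inl hxy))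
                (fun hn => hn (Or.inr (P.ler_trans hyz h')))
          · by_cases hxz : x = z
            · exact Or.inl (hxz ▸ P.leh_refl x)
            by_cases hxy' : x = y
            · exact Or.inl (hxy' ▸ hyz)
            by_cases hyz' : y = z
            · exact Or.inr (hyz' ▸ hxy)
            rcases Classical.em (P.leh x z ∨ P.ler x z) with h | h
            · tauto
            have hx := (P.compat x z hxz)
            have : P.leh z x ∨ P.ler z x := by tauto
            rcases this with h' | h'
            · exact absurd ((P.compat x y hxy').mp (Or.inr (P.leh_trans hyz h')))
                (fun hn => hn (Or.inl hxy))
            · exact absurd ((P.compat y z hyz').mp (Or.inl hyz))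
                (fun hn => hn (Or.inr (P.ler_trans h' hxy)))
          · exact Or.inr (P.ler_trans hxy hyz)
        le_antisymm := by
          rintro x y (h | h) (h' | h')
          · exact P.leh_antisymm h h'
          · by_contra hne
            exact (P.compat x y hne).mp (Or.inl h) (Or.inr h')
          · by_contra hne
            exact (P.compat x y hne).mp (Or.inr h') (Or.inl h)
          · exact P.ler_antisymm h h'
        le_total := by
          intro x y
          by_cases hne : x = y
          · exact Or.inl (Or.inl (hne ▸ P.leh_refl x))
          rcases Classical.em (P.leh x y ∨ P.leh y x) with h | h
          · rcases h with h | h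
            · exact Or.inl (Or.inl h)
            · exact Or.inr (Or.inl h)
          · have hc := (P.compat x y hne)
            have : P.ler x y ∨ P.ler y x := by tauto
            rcases this with h' | h'
            · exact Or.inl (Or.inr h')
            · exact Or.inr (Or.inr h')
        toDecidableLE := fun _ _ => Classical.dec _ }
    haveI : WellFoundedLT α := Finite.to_wellFoundedLT
    have hiso : ∀ x y : α, x ≤ y ↔ σ x ≤ σ y := by
      intro x y
      constructor
      · rintro (h | h)
        · exact Or.inl (h1 _ _ h)
        · exact Or.inr (h3 _ _ h)
      · rintro (h | h)
        · exact Or.inl (hrefl _ _ h)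
        · exact Or.inr (h2 _ _ h)
    let e : α ≃o α := ⟨σ, (hiso _ _).symm⟩
    have : e = OrderIso.refl α := Subsingleton.elim _ _
    ext x
    exact congrArg (fun f : α ≃o α => f x) this
  · rintro rfl
    exact ⟨fun x y h => h, fun x y h => h⟩
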